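/- Let Q be a quandle, G a group, and (φ, ·) an augmentation of Q on G. Fix q ∈ Q and set x = φ(q). Then for every Wirtinger code (n, κ, ε), the map f̃ ↦ φ∘f̃ is a bijection from the set of Q-colourings f̃ with f̃(0) = q and f̃(n) = q onto the set of G-colourings f with f(0) = x and q·l(f) = q, where l(f) denotes the longitude of f. -/

import Mathlib

/-- A quandle structure, given by operations `op = ◃` and `opInv = ◃⁻¹`. -/
def IsQuandle {Q : Type*} (op opInv : Q → Q → Q) : Prop :=
  (∀ a, op a a = a) ∧
  (∀ a b, opInv (op a b) b = a ∧ op (opInv a b) b = a) ∧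
  (∀ a b c, op (op a b) c = op (op a c) (op b c))

/-- An augmentation of the quandle `(Q, op)` on the group `G`: a map `φ : Q → G` together
with a right action of `G` on `Q` such that `a ◃ b = a · φ(b)` and `φ(a·g) = g⁻¹ φ(a) g`. -/
def IsAugmentation {Q G : Type*} [Group G] (op : Q → Q → Q)
    (φ : Q → G) (act : Q → G → Q) : Prop :=
  (∀ a, act a 1 = a) ∧
  (∀ a g h, act a (g * h) = act (act a g) h) ∧
  (∀ a b, op a b = act a (φ b)) ∧
  (∀ a g, φ (act a g) = g⁻¹ * φ a * g)

/-- A `G`-colouring of the Wirtinger code `(n, κ, ε)`. -/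
def IsGCol {G : Type*} [Group G] {n : ℕ} (κ : Fin n → Fin (n + 1)) (ε : Fin n → ℤ)
    (f : Fin (n + 1) → G) : Prop :=
  ∀ i : Fin n, f i.succ = f (κ i) ^ (-ε i) * f i.castSucc * f (κ i) ^ (ε i)

/-- The longitude of a `G`-colouring `f`: the ordered product
`∏_{i=1}^n f(i−1)^{−ε(i)} f(κ(i))^{ε(i)}`. -/
def longitude {G : Type*} [Group G] {n : ℕ} (κ : Fin n → Fin (n + 1)) (ε : Fin n → ℤ)
    (f : Fin (n + 1) → G) : G :=
  (List.ofFn fun i : Fin n => f i.castSucc ^ (-ε i) * f (κ i) ^ (ε i)).prod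

/-- A `Q`-colouring of the Wirtinger code `(n, κ, ε)` for a quandle `(Q, op, opInv)`. -/
def IsQCol {Q : Type*} (op opInv : Q → Q → Q) {n : ℕ} (κ : Fin n → Fin (n + 1))
    (ε : Fin n → ℤ) (f : Fin (n + 1) → Q) : Prop :=
  ∀ i : Fin n, f i.succ =
    if ε i = 1 then op (f i.castSucc) (f (κ i)) else opInv (f i.castSucc) (f (κ i))

/-- Given an augmentation `(φ, ·)` of a quandle `Q` on a group `G`, a basepoint
`q ∈ Q` with `x = φ(q)`, and a Wirtinger code, the map `f̃ ↦ φ∘f̃` is a bijection from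
`Q`-colourings with `f̃(0) = q` and `f̃(n) = q` onto `G`-colourings with `f(0) = x` and
`q · l(f) = q`. -/
theorem stmt_5 {Q G : Type*} [Group G] (op opInv : Q → Q → Q)
    (hq : IsQuandle op opInv)
    (φ : Q → G) (act : Q → G → Q) (haug : IsAugmentation op φ act)
    (q : Q) (x : G) (hx : x = φ q)
    (n : ℕ) (κ : Fin n → Fin (n + 1)) (ε : Fin n → ℤ) (hε : ∀ i, ε i = 1 ∨ ε i = -1) :
    Set.BijOn (fun f : Fin (n + 1) → Q => φ ∘ f)
      {f | IsQCol op opInv κ ε f ∧ f 0 = q ∧ f (Fin.last n) = q}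
      {f | IsGCol κ ε f ∧ f 0 = x ∧ act q (longitude κ ε f) = q} := by

  obtain ⟨hq1, hq2, -⟩ := hq
  obtain ⟨hid, hmul, hop, hφ⟩ := haug
  have hact_inv : ∀ (a : Q) (g : G), act (act a g) g⁻¹ = a := fun a g => by
    rw [← hmul, mul_inv_cancel, hid]
  have hopInv : ∀ a b, opInv a b = act a (φ b)⁻¹ := by
    intro a b
    have h := (hq2 a b).2
    rw [hop] at h
    calc opInv a b = act (act (opInv a b) (φ b)) (φ b)⁻¹ := (hact_inv _ _).symm
    _ = act a (φ b)⁻¹ := by rw [h]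
  have hfix : ∀ a : Q, act a (φ a) = a := fun a => by rw [← hop]; exact hq1 a
  have hfixinv : ∀ a : Q, act a (φ a)⁻¹ = a := fun a => by
    have h := hact_inv a (φ a)
    rwa [hfix] at h
  have hfixpow : ∀ (a : Q) (k : ℤ), act a (φ a ^ k) = a := by
    intro a k
    induction k using Int.induction_on with
    | zero => rw [zpow_zero, hid]
    | succ k ih => rw [zpow_add_one, hmul, ih, hfix]
    | pred k ih => rw [zpow_sub_one, hmul, ih, hfixinv]
  have hpref : ∀ (g : Fin (n+1) → G) (h : Fin (n+1) → Q),
      (∀ i : Fin n, h i.succ = act (h i.castSucc) (g i.castSucc ^ (-ε i) * g (κ i) ^ (ε i))) →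
      ∀ i : Fin (n+1), h i = act (h 0)
        (((List.ofFn fun j : Fin n => g j.castSucc ^ (-ε j) * g (κ j) ^ (ε j)).take i).prod) := by
    intro g h hrel i
    induction i using Fin.induction with
    | zero => simp [hid]
    | succ i ih =>
      have hi : (i : ℕ) <
          (List.ofFn fun j : Fin n => g j.castSucc ^ (-ε j) * g (κ j) ^ (ε j)).length := by
        simp [i.isLt]
      rw [hrel i, ih, ← hmul]
      congr 1
      rw [Fin.val_succ, List.prod_take_succ _ _ hi]
      congr 1
      simp [List.get_ofFn]
  have hstep : ∀ f : Fin (n+1) → Q, IsQCol op opInv κ ε f → ∀ i : Fin n,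
      f i.succ = act (f i.castSucc) (φ (f i.castSucc) ^ (-ε i) * φ (f (κ i)) ^ (ε i)) := by
    intro f hf i
    rw [hmul, hfixpow]
    rcases hε i with h | h
    · rw [hf i, if_pos h, h, hop, zpow_one]
    · rw [hf i, if_neg (by rw [h]; decide), h, hopInv, zpow_neg, zpow_one]
  refine ⟨?_, ?_, ?_⟩
  · -- MapsTo
    rintro f ⟨hcol, h0, hlast⟩
    refine ⟨?_, ?_, ?_⟩
    · intro i
      show φ (f i.succ) = φ (f (κ i)) ^ (-ε i) * φ (f i.castSucc) * φ (f (κ i)) ^ ε i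
      rcases hε i with h | h
      · rw [hcol i, if_pos h]
        simp only [Function.comp_apply, h, hop, hφ, zpow_one, zpow_neg]
      · rw [hcol i, if_neg (by rw [h]; decide)]
        simp only [Function.comp_apply, h, hopInv, hφ]
        group
    · simp [h0, hx]
    · have hp := hpref (φ ∘ f) f (hstep f hcol) (Fin.last n)
      rw [hlast, h0, Fin.val_last, List.take_of_length_le (by simp)] at hp
      exact hp.symm
  · -- InjOn
    rintro f1 ⟨hc1, h01, -⟩ f2 ⟨hc2, h02, -⟩ heq
    funext i
    induction i using Fin.induction with
    | zero => rw [h01, h02]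
    | succ i ih =>
      have hφκ : φ (f1 (κ i)) = φ (f2 (κ i)) := congrFun heq (κ i)
      rcases hε i with h | h
      · rw [hc1 i, hc2 i, if_pos h, if_pos h, hop, hop, ih, hφκ]
      · rw [hc1 i, hc2 i, if_neg (by rw [h]; decide), if_neg (by rw [h]; decide),
          hopInv, hopInv, ih, hφκ]
  · -- SurjOn
    rintro f ⟨hcol, h0, hl⟩
    set L := List.ofFn fun j : Fin n => f j.castSucc ^ (-ε j) * f (κ j) ^ (ε j) with hL
    set f' : Fin (n+1) → Q := fun i => act q ((L.take i).prod) with hf'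
    have hstep' : ∀ i : Fin n, f' i.succ =
        act (f' i.castSucc) (f i.castSucc ^ (-ε i) * f (κ i) ^ (ε i)) := by
      intro i
      have hi : (i : ℕ) < L.length := by simp [hL, i.isLt]
      rw [hf']
      simp only
      rw [Fin.val_succ, List.prod_take_succ _ _ hi, hmul]
      simp [hL, List.getElem_ofFn]
    have hf'0 : f' 0 = q := by
      rw [hf']
      simp [hid]
    have hφf' : ∀ i, φ (f' i) = f i := by
      intro i
      induction i using Fin.induction with
      | zero => rw [hf'0, ← hx, h0]
      | succ i ih =>
        rw [hstep' i, hφ, ih, hcol i]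
        group
    have hlast' : f' (Fin.last n) = q := by
      rw [hf']
      simp only [Fin.val_last]
      rw [List.take_of_length_le (by simp [hL])]
      exact hl
    have hQcol : IsQCol op opInv κ ε f' := by
      intro i
      rw [hstep' i, ← hφf' i.castSucc, ← hφf' (κ i), hmul, hfixpow]
      rcases hε i with h | h
      · rw [if_pos h, h, zpow_one, hop]
      · rw [if_neg (by rw [h]; decide), h, hopInv, zpow_neg, zpow_one]
    exact ⟨f', ⟨hQcol, hf'0, hlast'⟩, funext hφf'⟩
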